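/- Let r ∈ [1, 2+√3] and set ρ = r + 1/r and q(r) = 16/(8ρ − ρ²). Then: (i) for every Pigou instance G_P(a, n) and every WCR equilibrium x ∈ [0, n] of G_P(a, n) with uncertainty r, SC(x) ≤ q(r)·min_{y∈[0,n]} SC(y); and (ii) there exist a > 0, n > 0 and a WCR equilibrium x of G_P(a, n) with uncertainty r such that SC(x) = q(r)·min_{y∈[0,n]} SC(y). -/

import Mathlib

/-- Social cost in the Pigou instance `G_P(a,n)`: a mass `x ∈ [0,n]` uses resource 2
(with cost `c₂(t) = a·t`) and a mass `n − x` uses resource 1 (with `c₁(t) = 1`), so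
`SC(x) = (n − x) + a·x²`. -/
noncomputable def pigouSC (a n x : ℝ) : ℝ := (n - x) + a * x ^ 2

/-- Worst-case regret of resource 1 in `G_P(a,n)` under uncertainty `r`. -/
noncomputable def pigouWCR1 (a r x : ℝ) : ℝ := 1 - a * x / r

/-- Worst-case regret of resource 2 in `G_P(a,n)` under uncertainty `r`. -/
noncomputable def pigouWCR2 (a r x : ℝ) : ℝ := a * r * x - 1

/-- `x ∈ [0,n]` is a WCR equilibrium of `G_P(a,n)` with uncertainty `r` iff
`(x < n → WCR₁(x) ≤ WCR₂(x))` and `(x > 0 → WCR₂(x) ≤ WCR₁(x))`. -/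
def PigouWCREq (a n r x : ℝ) : Prop :=
  (x < n → pigouWCR1 a r x ≤ pigouWCR2 a r x) ∧
  (0 < x → pigouWCR2 a r x ≤ pigouWCR1 a r x)

/-- `x ∈ [0,n]` is a WCC equilibrium of `G_P(a,n)` with uncertainty `r` iff
`(x > 0 → a·r·x ≤ 1)` and `(x < n → a·r·x ≥ 1)`. -/
def PigouWCCEq (a n r x : ℝ) : Prop :=
  (0 < x → a * r * x ≤ 1) ∧ (x < n → 1 ≤ a * r * x)

set_option maxHeartbeats 1600000 in
/-- For `r ∈ [1, 2+√3]` and `q(r) = 16/(8ρ − ρ²)` with `ρ = r + 1/r`: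
(i) every WCR equilibrium of every Pigou instance has social cost at most `q(r)` times the
optimal social cost; (ii) this bound is tight for some Pigou instance and WCR equilibrium. -/
theorem stmt_7 (r : ℝ) (hr1 : 1 ≤ r) (hr2 : r ≤ 2 + Real.sqrt 3) :
    (∀ a n x : ℝ, 0 < a → 0 < n → x ∈ Set.Icc 0 n → PigouWCREq a n r x →
      ∀ y ∈ Set.Icc (0 : ℝ) n,
        pigouSC a n x ≤ 16 / (8 * (r + 1 / r) - (r + 1 / r) ^ 2) * pigouSC a n y) ∧
    (∃ a n x : ℝ, 0 < a ∧ 0 < n ∧ x ∈ Set.Icc 0 n ∧ PigouWCREq a n r x ∧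
      ∃ y ∈ Set.Icc (0 : ℝ) n, (∀ z ∈ Set.Icc (0 : ℝ) n, pigouSC a n y ≤ pigouSC a n z) ∧
        pigouSC a n x = 16 / (8 * (r + 1 / r) - (r + 1 / r) ^ 2) * pigouSC a n y) := by
  have hr0 : (0:ℝ) < r := lt_of_lt_of_le one_pos hr1
  have hrne : r ≠ 0 := hr0.ne'
  set ρ : ℝ := r + 1/r with hρdef
  clear_value ρ
  have hρr : ρ * r = r^2 + 1 := by rw [hρdef]; field_simp
  have hρ2 : 2 ≤ ρ := by nlinarith [sq_nonneg (r - 1)]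
  have hρ4 : ρ ≤ 4 := by
    have hs : Real.sqrt 3 ^ 2 = 3 := Real.sq_sqrt (by norm_num)
    have hs1 : 1 ≤ Real.sqrt 3 := by nlinarith [Real.sqrt_nonneg 3]
    nlinarith [mul_nonneg (show (0:ℝ) ≤ 2 + Real.sqrt 3 - r by linarith)
      (show (0:ℝ) ≤ Real.sqrt 3 + r - 2 by linarith)]
  have hρ0 : (0:ℝ) < ρ := by linarith
  have hρne : ρ ≠ 0 := hρ0.ne'
  have hD : (0:ℝ) < 8*ρ - ρ^2 := by nlinarith
  set q : ℝ := 16 / (8*ρ - ρ^2) with hqdef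
  clear_value q
  have hq16 : q * (8*ρ - ρ^2) = 16 := by
    rw [hqdef]; exact div_mul_cancel₀ 16 hD.ne'
  have hq1 : 1 ≤ q := by rw [hqdef, le_div_iff₀ hD]; nlinarith [sq_nonneg (ρ - 4)]
  have hq0 : (0:ℝ) < q := lt_of_lt_of_le one_pos hq1
  constructor
  · intro a n x ha hn hx heq y hy
    obtain ⟨hx0, hxn⟩ := Set.mem_Icc.mp hx
    obtain ⟨hy0, hyn⟩ := Set.mem_Icc.mp hy
    obtain ⟨he1, he2⟩ := heq
    have hsplit : ∀ z : ℝ, a * z * ρ = a*r*z + a*z/r := by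
      intro z; rw [hρdef]; field_simp
    have hxpos : 0 < x := by
      rcases eq_or_lt_of_le hx0 with h | h
      · exfalso
        have h1 := he1 (by rw [← h]; exact hn)
        simp only [pigouWCR1, pigouWCR2, ← h, mul_zero, zero_div] at h1
        linarith
      · exact h
    have hkey : a * x * ρ ≤ 2 := by
      have h := he2 hxpos
      simp only [pigouWCR1, pigouWCR2] at h
      rw [hsplit x]; linarith
    have hax : a * pigouSC a n x = a*n - a*x + (a*x)^2 := by simp only [pigouSC]; ring
    have hay : a * pigouSC a n y = a*n - a*y + (a*y)^2 := by simp only [pigouSC]; ring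
    suffices h : a * pigouSC a n x ≤ a * (q * pigouSC a n y) from
      le_of_mul_le_mul_left h ha
    have hb1 : a*n - 1/4 ≤ a * pigouSC a n y := by
      rw [hay]; nlinarith [sq_nonneg (a*y - 1/2)]
    have hum : a*x ≤ a*n := mul_le_mul_of_nonneg_left hxn ha.le
    rcases lt_or_eq_of_le hxn with hlt | heqn
    · -- x < n : a*x*ρ = 2
      have h1 := he1 hlt
      simp only [pigouWCR1, pigouWCR2] at h1
      have hu : a*x*ρ = 2 := by
        refine le_antisymm hkey ?_
        rw [hsplit x]; linarith
      have hid : (q*(a*n - 1/4) - (a*n - a*x + (a*x)^2)) * (4*ρ^2)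
          = (q - 1)*(a*n - a*x)*(4*ρ^2) := by
        linear_combination (4*q*ρ - 4*(a*x)*ρ - 8) * hu + hq16
      have hnn : 0 ≤ (q - 1)*(a*n - a*x)*(4*ρ^2) := by
        apply mul_nonneg (mul_nonneg (by linarith) (by linarith)); positivity
      have hρp : (0:ℝ) < 4*ρ^2 := by positivity
      have hfin : a*n - a*x + (a*x)^2 ≤ q*(a*n - 1/4) := by
        have h0 : 0 ≤ (q*(a*n - 1/4) - (a*n - a*x + (a*x)^2)) * (4*ρ^2) := hid ▸ hnn
        nlinarith [mul_pos hρp hρp]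
      calc a * pigouSC a n x = a*n - a*x + (a*x)^2 := hax
        _ ≤ q*(a*n - 1/4) := hfin
        _ ≤ q * (a * pigouSC a n y) := mul_le_mul_of_nonneg_left hb1 hq0.le
        _ = a * (q * pigouSC a n y) := by ring
    · -- x = n
      subst heqn
      rcases le_or_gt (a*x) (1/2) with hm | hm
      · have hb2 : (a*x)^2 ≤ a * pigouSC a x y := by
          rw [hay]
          have hv : a*y ≤ a*x := mul_le_mul_of_nonneg_left hyn ha.le
          nlinarith [mul_nonneg (sub_nonneg.mpr hv) (show (0:ℝ) ≤ 1 - a*y - a*x by linarith)]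
        calc a * pigouSC a x x = (a*x)^2 := by rw [hax]; ring
          _ ≤ q * ((a*x)^2) := le_mul_of_one_le_left (sq_nonneg _) hq1
          _ ≤ q * (a * pigouSC a x y) := mul_le_mul_of_nonneg_left hb2 hq0.le
          _ = a * (q * pigouSC a x y) := by ring
      · have hid2 : (q*(a*x - 1/4) - (a*x)^2) * (8*ρ - ρ^2)
            = (2 - a*x*ρ)*((a*x - 1/2)*(8 - ρ) + (4 - ρ)/2) := by
          linear_combination (a*x - 1/4) * hq16
        have hnn2 : 0 ≤ (2 - a*x*ρ)*((a*x - 1/2)*(8 - ρ) + (4 - ρ)/2) := by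
          apply mul_nonneg (by linarith)
          nlinarith
        have hfin2 : (a*x)^2 ≤ q*(a*x - 1/4) := by
          have h0 : 0 ≤ (q*(a*x - 1/4) - (a*x)^2) * (8*ρ - ρ^2) := hid2 ▸ hnn2
          nlinarith [hD]
        calc a * pigouSC a x x = (a*x)^2 := by rw [hax]; ring
          _ ≤ q*(a*x - 1/4) := hfin2
          _ ≤ q * (a * pigouSC a x y) := mul_le_mul_of_nonneg_left hb1 hq0.le
          _ = a * (q * pigouSC a x y) := by ring
  · refine ⟨1, 2/ρ, 2/ρ, one_pos, by positivity, ?_, ⟨?_, ?_⟩, 1/2, ?_, ?_, ?_⟩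
    · exact Set.mem_Icc.mpr ⟨by positivity, le_refl _⟩
    · intro h; exact absurd h (lt_irrefl _)
    · intro _
      have heq : pigouWCR2 1 r (2/ρ) = pigouWCR1 1 r (2/ρ) := by
        simp only [pigouWCR1, pigouWCR2, one_mul]
        field_simp
        linear_combination (-2) * hρr
      exact le_of_eq heq
    · refine Set.mem_Icc.mpr ⟨by norm_num, ?_⟩
      rw [div_le_div_iff₀ two_pos hρ0]; linarith
    · intro z hz
      obtain ⟨hz0, hzn⟩ := Set.mem_Icc.mp hz
      simp only [pigouSC, one_mul]
      nlinarith [sq_nonneg (z - 1/2)]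
    · simp only [pigouSC, one_mul]
      rw [hqdef]
      have h8 : (8:ℝ) - ρ ≠ 0 := (by linarith : (0:ℝ) < 8 - ρ).ne'
      field_simp
      ring
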